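/- Let I be an ideal of ℂ[x₁,…,x_n], w ∈ ℂⁿ, and v, v′ ∈ ℂⁿ such that for every h ∈ I one has h(w) = 0 and D¹_{w,v′}(h) = 0 (i.e. v′ is a first-order tangent direction to the zero set of I at w). Then for every r ≥ 1 and every f ∈ Iʳ, D^r_{w,v+v′}(f) = D^r_{w,v}(f). -/
import Mathlib


open Polynomial MvPolynomial

/-- `Dk k w v f` : the coefficient of `t^k` in the one-variable polynomial `t ↦ f (w + t • v)`. -/
noncomputable def Dk {n : ℕ} (k : ℕ) (w v : Fin n → ℂ) (f : MvPolynomial (Fin n) ℂ) : ℂ :=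
  (MvPolynomial.aeval
    (fun i => Polynomial.C (w i) + Polynomial.C (v i) * Polynomial.X) f).coeff k

noncomputable def phi {n : ℕ} (w u : Fin n → ℂ) :
    MvPolynomial (Fin n) ℂ →ₐ[ℂ] Polynomial ℂ :=
  MvPolynomial.aeval (fun i => Polynomial.C (w i) + Polynomial.C (u i) * Polynomial.X)

lemma Dk_eq_phi {n : ℕ} (k : ℕ) (w u : Fin n → ℂ) (f : MvPolynomial (Fin n) ℂ) :
    Dk k w u f = (phi w u f).coeff k := rfl

lemma coeff_zero_phi {n : ℕ} (w u : Fin n → ℂ) (f : MvPolynomial (Fin n) ℂ) :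
    (phi w u f).coeff 0 = MvPolynomial.eval w f := by
  induction f using MvPolynomial.induction_on with
  | C a => simp [phi]
  | add p q hp hq => simp [map_add, hp, hq]
  | mul_X p i hp =>
      rw [map_mul, Polynomial.mul_coeff_zero, hp, map_mul]
      congr 1
      simp [phi]

lemma coeff_one_phi_add {n : ℕ} (w a b : Fin n → ℂ) (f : MvPolynomial (Fin n) ℂ) :
    (phi w (a + b) f).coeff 1 = (phi w a f).coeff 1 + (phi w b f).coeff 1 := by
  induction f using MvPolynomial.induction_on with
  | C c => simp [phi]
  | add p q hp hq => simp [map_add, hp, hq]; ring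
  | mul_X p i hp =>
      have key : ∀ u : Fin n → ℂ, (phi w u (p * MvPolynomial.X i)).coeff 1 =
          (phi w u p).coeff 1 * w i + MvPolynomial.eval w p * u i := by
        intro u
        have : phi w u (p * MvPolynomial.X i) =
            phi w u p * Polynomial.C (w i) + (phi w u p * Polynomial.C (u i)) * Polynomial.X := by
          simp [phi]; ring
        rw [this, Polynomial.coeff_add, Polynomial.coeff_mul_C, Polynomial.coeff_mul_X,
          Polynomial.coeff_mul_C, coeff_zero_phi]
      rw [key, key, key, hp, Pi.add_apply]
      ring

theorem statement13 {n : ℕ} (I : Ideal (MvPolynomial (Fin n) ℂ)) (w : Fin n → ℂ)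
    (v v' : Fin n → ℂ)
    (hw : ∀ h ∈ I, MvPolynomial.eval w h = 0)
    (htan : ∀ h ∈ I, Dk 1 w v' h = 0) :
    ∀ r : ℕ, 1 ≤ r → ∀ f ∈ I ^ r, Dk r w (v + v') f = Dk r w v f := by
  -- auxiliary: X^r divides phi w u f for f ∈ I^r
  have hdvd : ∀ (u : Fin n → ℂ) (r : ℕ), ∀ f ∈ I ^ r, (Polynomial.X : ℂ[X]) ^ r ∣ phi w u f := by
    intro u r
    induction r with
    | zero => intro f _; simp
    | succ r ih =>
        intro f hf
        rw [pow_succ'] at hf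
        refine Submodule.mul_induction_on hf (fun h hh g hg => ?_) (fun x y hx hy => ?_)
        · rw [map_mul, pow_succ']
          exact mul_dvd_mul (Polynomial.X_dvd_iff.2 (by rw [coeff_zero_phi]; exact hw h hh))
            (ih g hg)
        · rw [map_add]; exact dvd_add hx hy
  -- key: X^(r+1) divides the difference
  have key : ∀ r : ℕ, ∀ f ∈ I ^ r,
      (Polynomial.X : ℂ[X]) ^ (r + 1) ∣ phi w (v + v') f - phi w v f := by
    intro r
    induction r with
    | zero =>
        intro f _
        rw [pow_one]
        refine Polynomial.X_dvd_iff.2 ?_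
        rw [Polynomial.coeff_sub, coeff_zero_phi, coeff_zero_phi, sub_self]
    | succ r ih =>
        intro f hf
        rw [pow_succ'] at hf
        refine Submodule.mul_induction_on hf (fun h hh g hg => ?_) (fun x y hx hy => ?_)
        · rw [map_mul, map_mul]
          have eq1 : phi w (v + v') h * phi w (v + v') g - phi w v h * phi w v g =
              phi w (v + v') h * (phi w (v + v') g - phi w v g) +
              (phi w (v + v') h - phi w v h) * phi w v g := by ring
          rw [eq1]
          refine dvd_add ?_ ?_
          · rw [show r + 1 + 1 = 1 + (r + 1) by ring, pow_add, pow_one]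
            exact mul_dvd_mul
              (Polynomial.X_dvd_iff.2 (by rw [coeff_zero_phi]; exact hw h hh)) (ih g hg)
          · rw [show r + 1 + 1 = 2 + r by ring, pow_add]
            refine mul_dvd_mul ?_ (hdvd v r g hg)
            refine Polynomial.X_pow_dvd_iff.2 fun d hd => ?_
            interval_cases d
            · rw [Polynomial.coeff_sub, coeff_zero_phi, coeff_zero_phi, sub_self]
            · have ht := htan h hh
              rw [Dk_eq_phi] at ht
              rw [Polynomial.coeff_sub, coeff_one_phi_add, ht]
              ring
        · rw [map_add, map_add,
            show phi w (v + v') x + phi w (v + v') y - (phi w v x + phi w v y) =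
              (phi w (v + v') x - phi w v x) + (phi w (v + v') y - phi w v y) by ring]
          exact dvd_add hx hy
  intro r _ f hf
  have := key r f hf
  have h0 : (phi w (v + v') f - phi w v f).coeff r = 0 :=
    Polynomial.X_pow_dvd_iff.1 this r (Nat.lt_succ_self r)
  rw [Dk_eq_phi, Dk_eq_phi]
  rw [Polynomial.coeff_sub] at h0
  exact sub_eq_zero.1 h0
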